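/- Let 1 ≤ k ≤ N-1, μ > 0, and γ ≥ 0 with γ ≠ 2. Define v(r) = exp(-(μ/(k(2-γ))) r^{2-γ}) for r ∈ (0,1). Then v > 0, v'(r)/r = -(μ/k) v(r) r^{-γ}, v''(r) - v'(r)/r ≥ 0 for all r ∈ (0,1), and consequently min(v''(r)+(k-1)v'(r)/r, k·v'(r)/r) + μ v(r) r^{-γ} = 0 for all r ∈ (0,1). -/

import Mathlib

open Set

theorem stmt9 (N k : ℕ) (hk1 : 1 ≤ k) (hkN : k + 1 ≤ N)
    (μ γ : ℝ) (hμ : 0 < μ) (hγ0 : 0 ≤ γ) (hγ2 : γ ≠ 2)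
    (v : ℝ → ℝ)
    (hv : ∀ r : ℝ, v r = Real.exp (-(μ / ((k:ℝ) * (2 - γ))) * r ^ (2 - γ))) :
    ∀ r ∈ Ioo (0:ℝ) 1,
      0 < v r ∧
      deriv v r / r = -(μ / (k:ℝ)) * v r * r ^ (-γ) ∧
      0 ≤ deriv (deriv v) r - deriv v r / r ∧
      min (deriv (deriv v) r + ((k:ℝ) - 1) * deriv v r / r)
          ((k:ℝ) * deriv v r / r) + μ * v r * r ^ (-γ) = 0 := by
  intro r hr
  obtain ⟨hr0, hr1⟩ := hr
  have hk0 : (0:ℝ) < k := by exact_mod_cast hk1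
  have hd : (2:ℝ) - γ ≠ 0 := sub_ne_zero.mpr (Ne.symm hγ2)
  set c : ℝ := -(μ / ((k:ℝ) * (2 - γ))) with hc
  have hvpos : ∀ x, 0 < v x := fun x => by rw [hv]; exact Real.exp_pos _
  have hE : c * (2 - γ) = -(μ / (k:ℝ)) := by
    rw [hc]; field_simp
  have hder : ∀ x : ℝ, 0 < x → HasDerivAt v (c * (2 - γ) * x ^ ((1:ℝ) - γ) * v x) x := by
    intro x hx
    have h1 : HasDerivAt (fun y : ℝ => y ^ ((2:ℝ) - γ)) ((2 - γ) * x ^ ((2:ℝ) - γ - 1)) x :=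
      Real.hasDerivAt_rpow_const (Or.inl hx.ne')
    have h2 := (h1.const_mul c).exp
    have hvf : (fun y : ℝ => Real.exp (c * y ^ ((2:ℝ) - γ))) = v := by
      funext y; rw [hv]
    rw [hvf] at h2
    have he : (2:ℝ) - γ - 1 = 1 - γ := by ring
    rw [he] at h2
    convert h2 using 1
    rw [hv]
    ring
  have hv' : deriv v r = -(μ / (k:ℝ)) * r ^ ((1:ℝ) - γ) * v r := by
    rw [(hder r hr0).deriv, hE]
  have h1γ : r ^ ((1:ℝ) - γ) = r * r ^ (-γ) := by
    rw [show (1:ℝ) - γ = 1 + (-γ) by ring, Real.rpow_add hr0, Real.rpow_one]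
  have hBpos : (0:ℝ) < r ^ (-γ) := Real.rpow_pos_of_pos hr0 _
  have hvr : deriv v r / r = -(μ / (k:ℝ)) * v r * r ^ (-γ) := by
    rw [hv', h1γ]
    field_simp
  -- second derivative
  have hev : deriv v =ᶠ[nhds r] fun x => -(μ / (k:ℝ)) * x ^ ((1:ℝ) - γ) * v x := by
    filter_upwards [eventually_gt_nhds hr0] with x hx
    rw [(hder x hx).deriv, hE]
  have hpow : HasDerivAt (fun x : ℝ => x ^ ((1:ℝ) - γ)) ((1 - γ) * r ^ ((1:ℝ) - γ - 1)) r :=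
    Real.hasDerivAt_rpow_const (Or.inl hr0.ne')
  have hg := (hpow.const_mul (-(μ / (k:ℝ)))).mul (hder r hr0)
  have hv'' : deriv (deriv v) r =
      -(μ / (k:ℝ)) * ((1 - γ) * r ^ ((1:ℝ) - γ - 1)) * v r +
        -(μ / (k:ℝ)) * r ^ ((1:ℝ) - γ) * (-(μ / (k:ℝ)) * r ^ ((1:ℝ) - γ) * v r) := by
    have hg' : HasDerivAt (fun x : ℝ => -(μ / (k:ℝ)) * x ^ ((1:ℝ) - γ) * v x) _ r := hg
    rw [hev.deriv_eq, hg'.deriv, hE]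
  have he2 : r ^ ((1:ℝ) - γ - 1) = r ^ (-γ) := by
    rw [show (1:ℝ) - γ - 1 = -γ by ring]
  rw [he2] at hv''
  have hineq : 0 ≤ deriv (deriv v) r - deriv v r / r := by
    rw [hv'', hvr, h1γ]
    have t1 : 0 ≤ μ / (k:ℝ) * γ * (r ^ (-γ)) * v r :=
      mul_nonneg (mul_nonneg (mul_nonneg (div_nonneg hμ.le hk0.le) hγ0) hBpos.le) (hvpos r).le
    have t2 : 0 ≤ (μ / (k:ℝ) * (r * r ^ (-γ)))^2 * v r :=
      mul_nonneg (sq_nonneg _) (hvpos r).le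
    nlinarith [t1, t2]
  refine ⟨hvpos r, hvr, hineq, ?_⟩
  have hmin : min (deriv (deriv v) r + ((k:ℝ) - 1) * deriv v r / r)
      ((k:ℝ) * deriv v r / r) = (k:ℝ) * deriv v r / r := by
    apply min_eq_right
    have : deriv (deriv v) r + ((k:ℝ) - 1) * deriv v r / r
        = (deriv (deriv v) r - deriv v r / r) + (k:ℝ) * deriv v r / r := by ring
    rw [this]
    linarith [hineq]
  rw [hmin, hv', h1γ]
  field_simp
  ring
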